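/- Let G be a finite connected simple graph with at least one edge and let H be a finite simple graph with at least one edge. Then Δ(G +_Q H) = max{Δ(Q(G)), Δ(G) + Δ(H)}, and moreover Δ(G +_Q H) < mbt(Q(G)) + Δ(H). -/

import Mathlib

open SimpleGraph

/-- Degree of a vertex. -/
noncomputable def deg {V : Type*} (G : SimpleGraph V) (v : V) : ℕ :=
  (G.neighborSet v).ncard

/-- Maximum degree Δ(G) of a finite simple graph. -/
noncomputable def maxDeg {V : Type*} [Fintype V] (G : SimpleGraph V) : ℕ :=
  Finset.univ.sup (deg G)

/-- `IsMBE G k f page` : the linear order on vertices given by the injection `f : V → ℕ`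
together with the page assignment `page` is a matching book embedding of `G` on `k` pages:
every edge gets a page `< k`, no two edges on a common page cross, and every vertex is
incident to at most one edge on each page. -/
def IsMBE {V : Type*} (G : SimpleGraph V) (k : ℕ) (f : V → ℕ) (page : Sym2 V → ℕ) : Prop :=
  Function.Injective f ∧
  (∀ u v, G.Adj u v → page s(u, v) < k) ∧
  (∀ u v x y, G.Adj u v → G.Adj x y → page s(u, v) = page s(x, y) →
    ¬(f u < f x ∧ f x < f v ∧ f v < f y)) ∧
  (∀ u v w, G.Adj u v → G.Adj u w → v ≠ w → page s(u, v) ≠ page s(u, w))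

/-- The matching book thickness of `G`: the least number of pages admitting a
matching book embedding. -/
noncomputable def mbt {V : Type*} (G : SimpleGraph V) : ℕ :=
  sInf {k | ∃ f page, IsMBE G k f page}

/-- A graph is outerplanar iff it has a one-page book embedding: a linear order of
its vertices (an injection into `ℕ`) in which no two edges cross. -/
def IsOuterplanar {V : Type*} (G : SimpleGraph V) : Prop :=
  ∃ f : V → ℕ, Function.Injective f ∧
    ∀ u v x y, G.Adj u v → G.Adj x y → ¬(f u < f x ∧ f x < f v ∧ f v < f y)

/-- The derived graph of `G` on vertex set `V(G) ⊕ E(G)`. Black–white edges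
(`u`–`(uv)` for `u` an endpoint of the edge `uv`) are always present; `black` indicates
whether the original edges of `G` are retained, and `white` indicates whether two edge
vertices corresponding to adjacent edges of `G` (distinct edges sharing an endpoint)
are joined. -/
def derivedG {V : Type*} (G : SimpleGraph V) (black white : Bool) :
    SimpleGraph (V ⊕ G.edgeSet) where
  Adj x y :=
    match x, y with
    | Sum.inl u, Sum.inl v => black = true ∧ G.Adj u v
    | Sum.inl u, Sum.inr e => u ∈ (e : Sym2 V)
    | Sum.inr e, Sum.inl u => u ∈ (e : Sym2 V)
    | Sum.inr e, Sum.inr f =>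
        white = true ∧ e ≠ f ∧ ∃ w, w ∈ (e : Sym2 V) ∧ w ∈ (f : Sym2 V)
  symm := by
    constructor; rintro (u | e) (v | f) h
    · exact ⟨h.1, h.2.symm⟩
    · exact h
    · exact h
    · obtain ⟨hw, hne, w, h1, h2⟩ := h
      exact ⟨hw, hne.symm, w, h2, h1⟩
  loopless := by
    constructor; rintro (u | e) h
    · exact G.irrefl h.2
    · exact h.2.1 rfl

/-- The four graph operations `S`, `R`, `Q`, `T`. -/
inductive FOp : Type
  | S | R | Q | T
  deriving DecidableEq

/-- Whether the operation retains the original (black–black) edges of `G`. -/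
def FOp.black : FOp → Bool
  | .R => true
  | .T => true
  | _ => false

/-- Whether the operation joins edge (white) vertices of adjacent edges. -/
def FOp.white : FOp → Bool
  | .Q => true
  | .T => true
  | _ => false

/-- `FGraph F G` is the graph `F(G)` for `F ∈ {S, R, Q, T}`. -/
def FGraph (F : FOp) {V : Type*} (G : SimpleGraph V) : SimpleGraph (V ⊕ G.edgeSet) :=
  derivedG G F.black F.white

/-- The `F`-sum `G +_F H`: vertex set `(V(G) ∪ E(G)) × V(H)`; `(u₁, u₂)` and `(v₁, v₂)`
are adjacent iff `u₁ = v₁ ∈ V(G)` and `u₂v₂ ∈ E(H)`, or `u₂ = v₂` and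
`u₁v₁ ∈ E(F(G))`. -/
def FSum (F : FOp) {V W : Type*} (G : SimpleGraph V) (H : SimpleGraph W) :
    SimpleGraph ((V ⊕ G.edgeSet) × W) where
  Adj x y :=
    (x.1 = y.1 ∧ (∃ u : V, x.1 = Sum.inl u) ∧ H.Adj x.2 y.2) ∨
    (x.2 = y.2 ∧ (FGraph F G).Adj x.1 y.1)
  symm := by
    constructor; rintro ⟨a, b⟩ ⟨c, d⟩ (⟨h1, h2, h3⟩ | ⟨h1, h2⟩)
    · exact Or.inl ⟨h1.symm, h1 ▸ h2, h3.symm⟩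
    · exact Or.inr ⟨h1.symm, h2.symm⟩
  loopless := by
    constructor; rintro ⟨a, b⟩ (⟨-, -, h⟩ | ⟨-, h⟩)
    · exact H.irrefl h
    · exact (FGraph F G).irrefl h

/-- The path graph `P_n` on `n` vertices. -/
def pathG (n : ℕ) : SimpleGraph (Fin n) where
  Adj i j := (i : ℕ) + 1 = (j : ℕ) ∨ (j : ℕ) + 1 = (i : ℕ)
  symm := by constructor; intro i j h; tauto
  loopless := by constructor; intro i h; omega

instance (n : ℕ) : DecidableRel (pathG n).Adj := fun i j =>
  inferInstanceAs (Decidable (_ ∨ _))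

/-- The cycle graph `C_n` on `n` vertices (intended for `n ≥ 3`). -/
def cycleG (n : ℕ) : SimpleGraph (Fin n) where
  Adj i j := i ≠ j ∧ (((i : ℕ) + 1) % n = (j : ℕ) ∨ ((j : ℕ) + 1) % n = (i : ℕ))
  symm := by constructor; intro i j h; tauto
  loopless := by constructor; intro i h; exact h.1 rfl

instance (n : ℕ) : DecidableRel (cycleG n).Adj := fun i j =>
  inferInstanceAs (Decidable (_ ∧ _))

/-- The star graph `S_n = K_{1,n}` on `n + 1` vertices: vertex `0` is the center. -/
def starG (n : ℕ) : SimpleGraph (Fin (n + 1)) where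
  Adj i j := i ≠ j ∧ (i = 0 ∨ j = 0)
  symm := by constructor; intro i j h; tauto
  loopless := by constructor; intro i h; exact h.1 rfl

instance (n : ℕ) : DecidableRel (starG n).Adj := fun i j =>
  inferInstanceAs (Decidable (_ ∧ _))

/-- The circulant graph `C(ℤ_m, {1, 2})`: vertices `0, …, m - 1`, with `i` adjacent to
`j` iff `i - j ≡ ±1` or `±2 (mod m)`. -/
def circulantG12 (m : ℕ) : SimpleGraph (Fin m) where
  Adj i j := i ≠ j ∧
    (((i : ℕ) + 1) % m = (j : ℕ) ∨ ((i : ℕ) + 2) % m = (j : ℕ) ∨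
     ((j : ℕ) + 1) % m = (i : ℕ) ∨ ((j : ℕ) + 2) % m = (i : ℕ))
  symm := by constructor; intro i j h; tauto
  loopless := by constructor; intro i h; exact h.1 rfl

section MyAux

lemma my_deg_le_maxDeg {α : Type*} [Fintype α] (X : SimpleGraph α) (v : α) :
    deg X v ≤ maxDeg X := Finset.le_sup (Finset.mem_univ v)

lemma my_exists_maxDeg {α : Type*} [Fintype α] [Nonempty α] (X : SimpleGraph α) :
    ∃ v, deg X v = maxDeg X := by
  obtain ⟨v, -, hv⟩ := Finset.exists_mem_eq_sup Finset.univ Finset.univ_nonempty (deg X)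
  exact ⟨v, hv.symm⟩

lemma my_maxDeg_le {α : Type*} [Fintype α] {X : SimpleGraph α} {m : ℕ}
    (h : ∀ v, deg X v ≤ m) : maxDeg X ≤ m :=
  Finset.sup_le fun v _ => h v

lemma my_one_le_deg {α : Type*} [Fintype α] {X : SimpleGraph α} {u v : α}
    (h : X.Adj u v) : 1 ≤ deg X u := by
  have : 0 < (X.neighborSet u).ncard := (Set.ncard_pos (Set.toFinite _)).mpr ⟨v, h⟩
  exact this

variable {V : Type*} [Fintype V] [DecidableEq V] (G : SimpleGraph V) [DecidableRel G.Adj]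

lemma my_deg_Q_inl (u : V) : deg (FGraph .Q G) (Sum.inl u) = deg G u := by
  have himg : (FGraph .Q G).neighborSet (Sum.inl u)
      = (fun v => if h : G.Adj u v then (Sum.inr ⟨s(u,v), h⟩ : V ⊕ G.edgeSet) else Sum.inl v)
        '' (G.neighborSet u) := by
    ext x
    simp only [SimpleGraph.mem_neighborSet, Set.mem_image]
    constructor
    · intro hx
      match x with
      | Sum.inl v => simp [FGraph, derivedG, FOp.black, FOp.white] at hx
      | Sum.inr e =>
        have hue : u ∈ (e : Sym2 V) := hx
        obtain ⟨v, hv⟩ := Sym2.mem_iff_exists.mp hue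
        have hadj : G.Adj u v := G.mem_edgeSet.mp (hv ▸ e.2)
        refine ⟨v, hadj, ?_⟩
        rw [dif_pos hadj]
        exact congrArg Sum.inr (Subtype.ext hv.symm)
    · rintro ⟨v, hadj, rfl⟩
      rw [dif_pos hadj]
      show u ∈ (⟨s(u,v), hadj⟩ : G.edgeSet).val
      exact Sym2.mem_mk_left u v
  rw [deg, himg, Set.ncard_image_of_injOn, ← deg]
  intro v₁ h₁ v₂ h₂ heq
  simp only [SimpleGraph.mem_neighborSet] at h₁ h₂
  simp only [dif_pos h₁, dif_pos h₂, Sum.inr.injEq, Subtype.mk.injEq] at heq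
  exact Sym2.congr_right.mp (congrArg Subtype.val heq)


/-- auxiliary map sending neighbors of `a` to neighbors of the edge vertex `s(a,b)`. -/
def gaux {V : Type*} [DecidableEq V] (G : SimpleGraph V) [DecidableRel G.Adj]
    (a b : V) : V → V ⊕ G.edgeSet := fun c =>
  if c = b then Sum.inl a else
    if h : G.Adj a c then Sum.inr ⟨s(a,c), h⟩ else Sum.inl c

lemma my_deg_Q_inr {a b : V} (hab : G.Adj a b) :
    deg (FGraph .Q G) (Sum.inr ⟨s(a,b), hab⟩) = deg G a + deg G b := by
  have hba : G.Adj b a := hab.symm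
  have hne : a ≠ b := hab.ne
  have himg : (FGraph .Q G).neighborSet (Sum.inr ⟨s(a,b), hab⟩)
      = gaux G a b '' (G.neighborSet a) ∪ gaux G b a '' (G.neighborSet b) := by
    ext x
    simp only [SimpleGraph.mem_neighborSet, Set.mem_union, Set.mem_image]
    constructor
    · intro hx
      match x with
      | Sum.inl u =>
        have hu : u ∈ s(a,b) := hx
        rcases Sym2.mem_iff.mp hu with rfl | rfl
        · exact Or.inl ⟨b, hab, by simp [gaux]⟩
        · exact Or.inr ⟨a, hba, by simp [gaux]⟩
      | Sum.inr f =>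
        have hx' : FOp.Q.white = true ∧ (⟨s(a,b), hab⟩ : G.edgeSet) ≠ f ∧
            ∃ w, w ∈ s(a,b) ∧ w ∈ (f : Sym2 V) := hx
        obtain ⟨-, hef, w, hw1, hw2⟩ := hx'
        rcases Sym2.mem_iff.mp hw1 with hw | hw <;> rw [hw] at hw2 <;> clear hw hw1
        · obtain ⟨c, hc⟩ := Sym2.mem_iff_exists.mp hw2
          have hadj : G.Adj a c := G.mem_edgeSet.mp (hc ▸ f.2)
          have hcb : c ≠ b := fun h => hef (Subtype.ext (by
            show s(a,b) = (f : Sym2 V)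
            rw [hc, h]))
          refine Or.inl ⟨c, hadj, ?_⟩
          simp only [gaux, if_neg hcb, dif_pos hadj]
          exact congrArg Sum.inr (Subtype.ext hc.symm)
        · obtain ⟨c, hc⟩ := Sym2.mem_iff_exists.mp hw2
          have hadj : G.Adj b c := G.mem_edgeSet.mp (hc ▸ f.2)
          have hca : c ≠ a := fun h => hef (Subtype.ext (by
            show s(a,b) = (f : Sym2 V)
            rw [hc, h, Sym2.eq_swap]))
          refine Or.inr ⟨c, hadj, ?_⟩
          simp only [gaux, if_neg hca, dif_pos hadj]
          exact congrArg Sum.inr (Subtype.ext hc.symm)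
    · rintro (⟨c, hc, rfl⟩ | ⟨c, hc, rfl⟩)
      · by_cases hcb : c = b
        · simp only [gaux, if_pos hcb]
          show a ∈ s(a,b)
          exact Sym2.mem_mk_left a b
        · simp only [gaux, if_neg hcb, dif_pos hc]
          refine ⟨rfl, ?_, a, Sym2.mem_mk_left a b, Sym2.mem_mk_left a c⟩
          intro hcontr
          have : s(a,b) = s(a,c) := congrArg Subtype.val hcontr
          exact hcb (Sym2.congr_right.mp this).symm
      · by_cases hca : c = a
        · simp only [gaux, if_pos hca]
          show b ∈ s(a,b)
          exact Sym2.mem_mk_right a b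
        · simp only [gaux, if_neg hca, dif_pos hc]
          refine ⟨rfl, ?_, b, Sym2.mem_mk_right a b, Sym2.mem_mk_left b c⟩
          intro hcontr
          have : s(a,b) = s(b,c) := congrArg Subtype.val hcontr
          rw [Sym2.eq_swap] at this
          exact hca (Sym2.congr_right.mp this).symm
  have hdisj : Disjoint (gaux G a b '' (G.neighborSet a)) (gaux G b a '' (G.neighborSet b)) := by
    rw [Set.disjoint_left]
    rintro x ⟨c, hc, rfl⟩ ⟨d, hd, hx⟩
    simp only [SimpleGraph.mem_neighborSet] at hc hd
    by_cases hcb : c = b <;> by_cases hda : d = a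
    · simp only [gaux, if_pos hcb, if_pos hda] at hx
      exact hne (Sum.inl.inj hx).symm
    · simp only [gaux, if_pos hcb, if_neg hda, dif_pos hd] at hx
      simp at hx
    · simp only [gaux, if_neg hcb, dif_pos hc, if_pos hda] at hx
      simp at hx
    · simp only [gaux, if_neg hcb, dif_pos hc, if_neg hda, dif_pos hd,
        Sum.inr.injEq, Subtype.mk.injEq] at hx
      rcases Sym2.eq_iff.mp (congrArg Subtype.val hx) with ⟨h1, h2⟩ | ⟨h1, h2⟩
      · exact hne h1.symm
      · exact hda h2
  have hinj : ∀ (p q : V), G.Adj p q → Set.InjOn (gaux G p q) (G.neighborSet p) := by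
    intro p q hpq c₁ h₁ c₂ h₂ heq
    simp only [SimpleGraph.mem_neighborSet] at h₁ h₂
    by_cases e₁ : c₁ = q <;> by_cases e₂ : c₂ = q
    · rw [e₁, e₂]
    · simp only [gaux, if_pos e₁, if_neg e₂, dif_pos h₂] at heq
      simp at heq
    · simp only [gaux, if_neg e₁, dif_pos h₁, if_pos e₂] at heq
      simp at heq
    · simp only [gaux, if_neg e₁, dif_pos h₁, if_neg e₂, dif_pos h₂,
        Sum.inr.injEq, Subtype.mk.injEq] at heq
      exact Sym2.congr_right.mp (congrArg Subtype.val heq)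
  rw [deg, himg, Set.ncard_union_eq hdisj (Set.toFinite _) (Set.toFinite _),
    Set.ncard_image_of_injOn (hinj a b hab), Set.ncard_image_of_injOn (hinj b a hba)]
  rfl


variable {W : Type*} [Fintype W] (H : SimpleGraph W)

lemma my_deg_FSum_inl (u : V) (w : W) :
    deg (FSum .Q G H) (Sum.inl u, w) = deg G u + deg H w := by
  have himg : (FSum .Q G H).neighborSet (Sum.inl u, w)
      = (fun x => (x, w)) '' (FGraph .Q G).neighborSet (Sum.inl u)
        ∪ (fun w' => ((Sum.inl u : V ⊕ G.edgeSet), w')) '' H.neighborSet w := by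
    ext ⟨y1, y2⟩
    simp only [SimpleGraph.mem_neighborSet, Set.mem_union, Set.mem_image]
    constructor
    · rintro (⟨h1, -, h3⟩ | ⟨h1, h2⟩)
      · have h1' : (Sum.inl u : V ⊕ G.edgeSet) = y1 := h1
        exact Or.inr ⟨y2, h3, by rw [h1']⟩
      · have h1' : w = y2 := h1
        exact Or.inl ⟨y1, h2, by rw [h1']⟩
    · rintro (⟨x, hx, heq⟩ | ⟨w', hw', heq⟩)
      · have e1 : x = y1 := congrArg Prod.fst heq
        have e2 : w = y2 := congrArg Prod.snd heq
        exact Or.inr ⟨e2, e1 ▸ hx⟩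
      · have e1 : (Sum.inl u : V ⊕ G.edgeSet) = y1 := congrArg Prod.fst heq
        have e2 : w' = y2 := congrArg Prod.snd heq
        exact Or.inl ⟨e1, ⟨u, rfl⟩, e2 ▸ hw'⟩
  have hdisj : Disjoint ((fun x => (x, w)) '' (FGraph .Q G).neighborSet (Sum.inl u))
      ((fun w' => ((Sum.inl u : V ⊕ G.edgeSet), w')) '' H.neighborSet w) := by
    rw [Set.disjoint_left]
    rintro p ⟨x, hx, rfl⟩ ⟨w', hw', heq⟩
    simp only [SimpleGraph.mem_neighborSet] at hw'
    have h2' : w' = w := congrArg Prod.snd heq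
    exact H.loopless.irrefl w (h2' ▸ hw')
  have hi1 : Set.InjOn (fun x => ((x : V ⊕ G.edgeSet), w)) ((FGraph .Q G).neighborSet (Sum.inl u)) :=
    fun x _ y _ h => congrArg Prod.fst h
  have hi2 : Set.InjOn (fun w' => ((Sum.inl u : V ⊕ G.edgeSet), w')) (H.neighborSet w) :=
    fun x _ y _ h => congrArg Prod.snd h
  rw [deg, himg, Set.ncard_union_eq hdisj (Set.toFinite _) (Set.toFinite _),
    Set.ncard_image_of_injOn hi1, Set.ncard_image_of_injOn hi2]
  rw [show ((FGraph .Q G).neighborSet (Sum.inl u)).ncard = deg (FGraph .Q G) (Sum.inl u) from rfl,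
    my_deg_Q_inl]
  rfl

lemma my_deg_FSum_inr (e : G.edgeSet) (w : W) :
    deg (FSum .Q G H) (Sum.inr e, w) = deg (FGraph .Q G) (Sum.inr e) := by
  have himg : (FSum .Q G H).neighborSet (Sum.inr e, w)
      = (fun x => (x, w)) '' (FGraph .Q G).neighborSet (Sum.inr e) := by
    ext ⟨y1, y2⟩
    simp only [SimpleGraph.mem_neighborSet, Set.mem_image]
    constructor
    · rintro (⟨-, ⟨u', hu'⟩, -⟩ | ⟨h1, h2⟩)
      · exact absurd hu' (by simp)
      · have h1' : w = y2 := h1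
        exact ⟨y1, h2, by rw [h1']⟩
    · rintro ⟨x, hx, heq⟩
      have e1 : x = y1 := congrArg Prod.fst heq
      have e2 : w = y2 := congrArg Prod.snd heq
      exact Or.inr ⟨e2, e1 ▸ hx⟩
  have hi1 : Set.InjOn (fun x => ((x : V ⊕ G.edgeSet), w)) ((FGraph .Q G).neighborSet (Sum.inr e)) :=
    fun x _ y _ h => congrArg Prod.fst h
  rw [deg, himg, Set.ncard_image_of_injOn hi1]
  rfl

lemma my_exists_MBE {α : Type*} [Fintype α] [DecidableEq α] (X : SimpleGraph α) :
    ∃ k f page, IsMBE X k f page := by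
  refine ⟨Fintype.card (Sym2 α), fun a => (Fintype.equivFin α a : ℕ),
    fun z => (Fintype.equivFin (Sym2 α) z : ℕ), ?_, ?_, ?_, ?_⟩
  · exact fun x y h => (Fintype.equivFin α).injective (Fin.val_injective h)
  · intro u v _
    exact (Fintype.equivFin (Sym2 α) s(u,v)).isLt
  · intro u v x y _ _ hpage
    have hz : s(u,v) = s(x,y) :=
      (Fintype.equivFin (Sym2 α)).injective (Fin.val_injective hpage)
    rcases Sym2.eq_iff.mp hz with ⟨rfl, rfl⟩ | ⟨rfl, rfl⟩
    · rintro ⟨h1, -, -⟩; exact lt_irrefl _ h1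
    · rintro ⟨h1, h2, h3⟩; omega
  · intro u v x _ _ hvx hpage
    have hz : s(u,v) = s(u,x) :=
      (Fintype.equivFin (Sym2 α)).injective (Fin.val_injective hpage)
    exact hvx (Sym2.congr_right.mp hz)

lemma my_maxDeg_le_mbt {α : Type*} [Fintype α] [DecidableEq α] (X : SimpleGraph α) :
    maxDeg X ≤ mbt X := by
  have hne : {k | ∃ f page, IsMBE X k f page}.Nonempty := by
    obtain ⟨k, f, page, h⟩ := my_exists_MBE X
    exact ⟨k, f, page, h⟩
  obtain ⟨f, page, hf, h2, h3, h4⟩ := Nat.sInf_mem hne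
  refine my_maxDeg_le fun v => ?_
  set k := sInf {k | ∃ f page, IsMBE X k f page}
  have : Nat.card (X.neighborSet v) ≤ Nat.card (Fin k) := by
    refine Nat.card_le_card_of_injective
      (fun x => (⟨page s(v, x.1), h2 v x.1 x.2⟩ : Fin k)) ?_
    rintro ⟨x, hx⟩ ⟨y, hy⟩ hxy
    simp only [Fin.mk.injEq] at hxy
    by_contra hne'
    exact h4 v x y hx hy (fun h => hne' (Subtype.ext h)) hxy
  have h' : (X.neighborSet v).ncard ≤ k := by simpa [Nat.card_coe_set_eq] using this
  exact h'

end MyAux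

/-- For a finite connected simple graph `G` with at least one edge and a
finite simple graph `H` with at least one edge,
`Δ(G +_Q H) = max {Δ(Q(G)), Δ(G) + Δ(H)}` and `Δ(G +_Q H) < mbt(Q(G)) + Δ(H)`. -/
theorem maxDeg_QSum {V W : Type*} [Fintype V] [DecidableEq V] [Fintype W]
    (G : SimpleGraph V) [DecidableRel G.Adj] (H : SimpleGraph W)
    (hGconn : G.Connected) (hGE : G.edgeSet.Nonempty) (hHE : H.edgeSet.Nonempty) :
    maxDeg (FSum .Q G H) = max (maxDeg (FGraph .Q G)) (maxDeg G + maxDeg H) ∧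
      maxDeg (FSum .Q G H) < mbt (FGraph .Q G) + maxDeg H := by
  classical
  obtain ⟨e0, he0⟩ := hGE
  have hexG : ∃ a b : V, G.Adj a b := by
    induction e0 using Sym2.ind with
    | _ a b => exact ⟨a, b, he0⟩
  obtain ⟨a0, b0, hab0⟩ := hexG
  obtain ⟨e1, he1⟩ := hHE
  have hexH : ∃ a b : W, H.Adj a b := by
    induction e1 using Sym2.ind with
    | _ a b => exact ⟨a, b, he1⟩
  obtain ⟨c0, d0, hcd0⟩ := hexH
  haveI : Nonempty V := ⟨a0⟩
  haveI : Nonempty W := ⟨c0⟩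
  have hH1 : 1 ≤ maxDeg H := le_trans (my_one_le_deg hcd0) (my_deg_le_maxDeg H c0)
  obtain ⟨ug, hug⟩ := my_exists_maxDeg G
  obtain ⟨wh, hwh⟩ := my_exists_maxDeg H
  have hG1 : 1 ≤ deg G ug := by
    rw [hug]; exact le_trans (my_one_le_deg hab0) (my_deg_le_maxDeg G a0)
  obtain ⟨vg, hvg⟩ : (G.neighborSet ug).Nonempty :=
    (Set.ncard_pos (Set.toFinite _)).mp hG1
  have hvg' : G.Adj ug vg := hvg
  have hQge : maxDeg G + 1 ≤ maxDeg (FGraph .Q G) := by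
    have h1 : deg (FGraph .Q G) (Sum.inr ⟨s(ug,vg), hvg'⟩) = deg G ug + deg G vg :=
      my_deg_Q_inr G hvg'
    have h2 : 1 ≤ deg G vg := my_one_le_deg hvg'.symm
    have h3 := my_deg_le_maxDeg (FGraph .Q G) (Sum.inr ⟨s(ug,vg), hvg'⟩)
    omega
  have hEq : maxDeg (FSum .Q G H) = max (maxDeg (FGraph .Q G)) (maxDeg G + maxDeg H) := by
    apply le_antisymm
    · refine my_maxDeg_le fun v => ?_
      obtain ⟨x, w⟩ := v
      cases x with
      | inl u =>
        rw [my_deg_FSum_inl G H]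
        exact le_max_of_le_right (Nat.add_le_add (my_deg_le_maxDeg G u) (my_deg_le_maxDeg H w))
      | inr e =>
        rw [my_deg_FSum_inr G H]
        exact le_max_of_le_left (my_deg_le_maxDeg _ _)
    · rw [max_le_iff]
      constructor
      · obtain ⟨x, hx⟩ := my_exists_maxDeg (FGraph .Q G)
        cases x with
        | inl u =>
          rw [← hx, my_deg_Q_inl]
          calc deg G u ≤ maxDeg G := my_deg_le_maxDeg G u
            _ ≤ maxDeg G + maxDeg H := Nat.le_add_right _ _
            _ = deg (FSum .Q G H) (Sum.inl ug, wh) := by rw [my_deg_FSum_inl G H, hug, hwh]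
            _ ≤ maxDeg (FSum .Q G H) := my_deg_le_maxDeg _ _
        | inr e =>
          rw [← hx]
          calc deg (FGraph .Q G) (Sum.inr e)
              = deg (FSum .Q G H) (Sum.inr e, wh) := (my_deg_FSum_inr G H e wh).symm
            _ ≤ maxDeg (FSum .Q G H) := my_deg_le_maxDeg _ _
      · calc maxDeg G + maxDeg H
            = deg (FSum .Q G H) (Sum.inl ug, wh) := by rw [my_deg_FSum_inl G H, hug, hwh]
          _ ≤ maxDeg (FSum .Q G H) := my_deg_le_maxDeg _ _
  refine ⟨hEq, ?_⟩
  rw [hEq]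
  have hmbt : maxDeg (FGraph .Q G) ≤ mbt (FGraph .Q G) := my_maxDeg_le_mbt _
  rw [max_lt_iff]
  exact ⟨by omega, by omega⟩
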